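/- Let X be an N×N random matrix with independent entries such that P(X_{i,j} ≠ 0) ≤ q for all i,j, where 0 ≤ q and qN < 1. Then P(ρ(X) > 0) ≤ Σ_{ℓ=1}^N (qN)^ℓ; in particular, if qN ≤ 1/2 then P(ρ(X) > 0) ≤ 2qN. -/

import Mathlib

open MeasureTheory ProbabilityTheory ENNReal

/-- The spectral radius of a complex matrix: the largest modulus of an eigenvalue. -/
noncomputable def specRad {N : ℕ} (X : Matrix (Fin N) (Fin N) ℂ) : ℝ :=
  sSup {r : ℝ | ∃ z ∈ spectrum ℂ X, r = ‖z‖}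

lemma specRad_aux_eigvec {N : ℕ} (M : Matrix (Fin N) (Fin N) ℂ) (h : 0 < specRad M) :
    ∃ z : ℂ, z ≠ 0 ∧ ∃ v : Fin N → ℂ, v ≠ 0 ∧ M.mulVec v = z • v := by
  have hne : {r : ℝ | ∃ z ∈ spectrum ℂ M, r = ‖z‖}.Nonempty := by
    by_contra hc
    rw [Set.not_nonempty_iff_eq_empty] at hc
    rw [specRad, hc, Real.sSup_empty] at h
    exact lt_irrefl 0 h
  obtain ⟨r, ⟨z, hz, rfl⟩, hr⟩ := exists_lt_of_lt_csSup hne h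
  have hz0 : z ≠ 0 := by
    intro h0; rw [h0] at hr; simp at hr
  rw [spectrum.mem_iff] at hz
  rw [Matrix.isUnit_iff_isUnit_det, isUnit_iff_ne_zero, not_not] at hz
  obtain ⟨v, hv, hmv⟩ := Matrix.exists_mulVec_eq_zero_iff.mpr hz
  refine ⟨z, hz0, v, hv, ?_⟩
  have : (algebraMap ℂ (Matrix (Fin N) (Fin N) ℂ)) z = z • (1 : Matrix (Fin N) (Fin N) ℂ) := by
    rw [Algebra.algebraMap_eq_smul_one]
  rw [this, Matrix.sub_mulVec, Matrix.smul_mulVec, Matrix.one_mulVec, sub_eq_zero] at hmv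
  exact hmv.symm

lemma specRad_aux_cycle {N : ℕ} (M : Matrix (Fin N) (Fin N) ℂ)
    {z : ℂ} (hz : z ≠ 0) {v : Fin N → ℂ} (hv : v ≠ 0) (hev : M.mulVec v = z • v) :
    ∃ ℓ, ℓ < N ∧ ∃ f : Fin (ℓ+1) → Fin N, Function.Injective f ∧
      ∀ k, M (f k) (f (k+1)) ≠ 0 := by
  classical
  have key : ∀ i : Fin N, v i ≠ 0 → ∃ j, M i j ≠ 0 ∧ v j ≠ 0 := by
    intro i hi
    have h1 : ∑ j, M i j * v j = z * v i := by
      have := congrFun hev i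
      simpa [Matrix.mulVec, dotProduct] using this
    have h2 : ∑ j, M i j * v j ≠ 0 := by rw [h1]; exact mul_ne_zero hz hi
    obtain ⟨j, _, hj⟩ := Finset.exists_ne_zero_of_sum_ne_zero h2
    exact ⟨j, left_ne_zero_of_mul hj, right_ne_zero_of_mul hj⟩
  obtain ⟨i₀, hi₀⟩ : ∃ i, v i ≠ 0 := Function.ne_iff.mp hv
  let step : {i : Fin N // v i ≠ 0} → {i : Fin N // v i ≠ 0} := fun i =>
    ⟨(key i.1 i.2).choose, (key i.1 i.2).choose_spec.2⟩
  let U : ℕ → {i : Fin N // v i ≠ 0} := fun n => step^[n] ⟨i₀, hi₀⟩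
  let u : ℕ → Fin N := fun n => (U n).1
  have hedge : ∀ n, M (u n) (u (n+1)) ≠ 0 := by
    intro n
    have hU : U (n+1) = step (U n) := Function.iterate_succ_apply' step n _
    have : u (n+1) = (key (U n).1 (U n).2).choose := by
      simp only [u, hU]
      rfl
    rw [this]
    exact (key (U n).1 (U n).2).choose_spec.1
  -- pigeonhole
  have hQ : ∃ b, ∃ a, a < b ∧ u a = u b := by
    have hnotinj : ¬ Function.Injective (fun k : Fin (N+1) => u k.val) := by
      intro hinj
      have := Fintype.card_le_of_injective _ hinj
      simp at this
    obtain ⟨a, b, hab, hne⟩ := Function.not_injective_iff.mp hnotinj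
    rcases lt_or_gt_of_ne (fun h => hne (Fin.ext h)) with h | h
    · exact ⟨b, a, h, hab⟩
    · exact ⟨a, b, h, hab.symm⟩
  let b₀ := Nat.find hQ
  obtain ⟨a₀, ha₀b, hab⟩ : ∃ a, a < b₀ ∧ u a = u b₀ := Nat.find_spec hQ
  have hinj : ∀ x y, x < y → y < b₀ → u x ≠ u y := by
    intro x y hxy hyb hxyeq
    exact Nat.find_min hQ hyb ⟨x, hxy, hxyeq⟩
  obtain ⟨ℓ, hℓ⟩ : ∃ ℓ, b₀ = a₀ + (ℓ + 1) := ⟨b₀ - a₀ - 1, by omega⟩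
  refine ⟨ℓ, ?_, fun k => u (a₀ + k.val), ?_, ?_⟩
  · -- ℓ < N : since u is injective on [a₀, b₀) giving ℓ+1 distinct values in Fin N
    by_contra hc
    push_neg at hc
    -- then a₀ + N < b₀, and u a₀ ... u (a₀+N) distinct: ℓ+1 ≥ N+1 distinct values
    have hinj' : Function.Injective (fun k : Fin (N+1) => u (a₀ + k.val)) := by
      intro x y hxy
      by_contra hne
      have hx : a₀ + x.val < b₀ := by omega
      have hy : a₀ + y.val < b₀ := by omega
      rcases lt_or_gt_of_ne (fun h : x.val = y.val => hne (Fin.ext h)) with h | h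
      · exact hinj _ _ (by omega) hy hxy
      · exact hinj _ _ (by omega) hx hxy.symm
    have := Fintype.card_le_of_injective _ hinj'
    simp at this
  · intro x y hxy
    by_contra hne
    have hx : a₀ + x.val < b₀ := by have := x.isLt; omega
    have hy : a₀ + y.val < b₀ := by have := y.isLt; omega
    rcases lt_or_gt_of_ne (fun h : x.val = y.val => hne (Fin.ext h)) with h | h
    · exact hinj _ _ (by omega) hy hxy
    · exact hinj _ _ (by omega) hx hxy.symm
  · intro k
    have hval : ((k + 1 : Fin (ℓ+1))).val = (k.val + 1) % (ℓ + 1) := by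
      rw [Fin.add_def]
      simp [Nat.add_mod]
    rcases Nat.lt_or_ge (k.val + 1) (ℓ + 1) with h | h
    · have : ((k + 1 : Fin (ℓ+1))).val = k.val + 1 := by rw [hval, Nat.mod_eq_of_lt h]
      simp only [this]
      have h2 := hedge (a₀ + k.val)
      have e : a₀ + (k.val + 1) = a₀ + k.val + 1 := by omega
      rw [e]
      exact h2
    · have hk : k.val = ℓ := by have := k.isLt; omega
      have h0 : ((k + 1 : Fin (ℓ+1))).val = 0 := by rw [hval, hk]; simp
      have heq : u (a₀ + ℓ + 1) = u a₀ := by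
        have e : a₀ + ℓ + 1 = b₀ := by omega
        rw [e, ← hab]
      have h2 := hedge (a₀ + ℓ)
      rw [heq] at h2
      simp only [h0, hk]
      rw [Nat.add_zero]
      exact h2

lemma specRad_pos_cycle {N : ℕ} (M : Matrix (Fin N) (Fin N) ℂ) (h : 0 < specRad M) :
    ∃ ℓ, ℓ < N ∧ ∃ f : Fin (ℓ+1) → Fin N, Function.Injective f ∧
      ∀ k, M (f k) (f (k+1)) ≠ 0 := by
  obtain ⟨z, hz, v, hv, hev⟩ := specRad_aux_eigvec M h
  exact specRad_aux_cycle M hz hv hev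

/-- Let `X` be an `N × N` random matrix with independent entries with
`P(X_{i,j} ≠ 0) ≤ q` for all `i, j`, where `0 ≤ q` and `qN < 1`. Then
`P(ρ(X) > 0) ≤ Σ_{ℓ=1}^N (qN)^ℓ`; in particular, if `qN ≤ 1/2` then
`P(ρ(X) > 0) ≤ 2qN`. -/
theorem sparse_matrix_spectral_radius_zero
    {Ω : Type*} [MeasurableSpace Ω] (P : Measure Ω) [IsProbabilityMeasure P]
    {N : ℕ} (X : Fin N → Fin N → Ω → ℂ) (hXm : ∀ i j, Measurable (X i j))
    (hindep : iIndepFun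
      (fun p : Fin N × Fin N => X p.1 p.2) P)
    (q : ℝ) (hq : 0 ≤ q) (hqN : q * N < 1)
    (hentry : ∀ i j, (P {ω | X i j ω ≠ 0}).toReal ≤ q) :
    (P {ω | 0 < specRad (Matrix.of fun i j => X i j ω)}).toReal ≤
      ∑ ℓ ∈ Finset.Icc 1 N, (q * N) ^ ℓ ∧
    (q * N ≤ 1 / 2 →
      (P {ω | 0 < specRad (Matrix.of fun i j => X i j ω)}).toReal ≤ 2 * (q * N)) := by
  classical
  set E := {ω | 0 < specRad (Matrix.of fun i j => X i j ω)} with hE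
  set Ev : (ℓ : ℕ) → (Fin (ℓ+1) → Fin N) → Set Ω :=
    fun ℓ f => {ω | ∀ k, X (f k) (f (k+1)) ω ≠ 0} with hEvdef
  -- union bound inclusion
  have hsub : E ⊆ ⋃ ℓ ∈ Finset.range N,
      ⋃ f ∈ Finset.univ.filter (fun f : Fin (ℓ+1) → Fin N => Function.Injective f),
        Ev ℓ f := by
    intro ω hω
    obtain ⟨ℓ, hℓ, f, hfinj, hfe⟩ := specRad_pos_cycle _ hω
    exact Set.mem_biUnion (Finset.mem_range.mpr hℓ)
      (Set.mem_biUnion (Finset.mem_filter.mpr ⟨Finset.mem_univ _, hfinj⟩) hfe)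
  -- bound for a single injective cycle event
  have hEv : ∀ (ℓ : ℕ) (f : Fin (ℓ+1) → Fin N), Function.Injective f →
      P (Ev ℓ f) ≤ ENNReal.ofReal q ^ (ℓ + 1) := by
    intro ℓ f hf
    set pr : Fin (ℓ+1) → Fin N × Fin N := fun k => (f k, f (k+1)) with hprdef
    have hpr : Function.Injective pr := fun a b h => hf (congrArg Prod.fst h)
    set S : Finset (Fin N × Fin N) := Finset.image pr Finset.univ with hS
    have hEveq : Ev ℓ f =
        ⋂ p ∈ S, (fun p : Fin N × Fin N => X p.1 p.2) p ⁻¹' ({0}ᶜ : Set ℂ) := by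
      ext ω
      simp only [hEvdef, Set.mem_setOf_eq, Set.mem_iInter, hS, Finset.mem_image,
        Finset.mem_univ, true_and, Set.mem_preimage, Set.mem_compl_iff,
        Set.mem_singleton_iff]
      constructor
      · rintro h p ⟨k, rfl⟩
        exact h k
      · intro h k
        exact h (pr k) ⟨k, rfl⟩
    have hprod := (iIndepFun_iff_measure_inter_preimage_eq_mul.mp hindep) S
      (sets := fun _ => ({0}ᶜ : Set ℂ)) (fun i _ => (measurableSet_singleton 0).compl)
    rw [hEveq, hprod]
    have hcard : S.card = ℓ + 1 := by
      rw [hS, Finset.card_image_of_injective _ hpr, Finset.card_univ, Fintype.card_fin]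
    calc ∏ p ∈ S, P ((fun p : Fin N × Fin N => X p.1 p.2) p ⁻¹' ({0}ᶜ : Set ℂ))
        ≤ (ENNReal.ofReal q) ^ S.card := by
          apply Finset.prod_le_pow_card
          intro p _
          rw [ENNReal.le_ofReal_iff_toReal_le (measure_ne_top P _) hq]
          have : (fun p : Fin N × Fin N => X p.1 p.2) p ⁻¹' ({0}ᶜ : Set ℂ)
              = {ω | X p.1 p.2 ω ≠ 0} := by
            ext ω; simp
          rw [this]
          exact hentry p.1 p.2
      _ = (ENNReal.ofReal q) ^ (ℓ + 1) := by rw [hcard]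
  -- main ENNReal bound
  have hmain : P E ≤ ∑ m ∈ Finset.Icc 1 N, ENNReal.ofReal ((q * N) ^ m) := by
    calc P E ≤ P (⋃ ℓ ∈ Finset.range N,
        ⋃ f ∈ Finset.univ.filter (fun f : Fin (ℓ+1) → Fin N => Function.Injective f),
          Ev ℓ f) := measure_mono hsub
      _ ≤ ∑ ℓ ∈ Finset.range N, P (⋃ f ∈ Finset.univ.filter
            (fun f : Fin (ℓ+1) → Fin N => Function.Injective f), Ev ℓ f) :=
          measure_biUnion_finset_le _ _
      _ ≤ ∑ ℓ ∈ Finset.range N, ∑ f ∈ Finset.univ.filter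
            (fun f : Fin (ℓ+1) → Fin N => Function.Injective f), P (Ev ℓ f) :=
          Finset.sum_le_sum (fun ℓ _ => measure_biUnion_finset_le _ _)
      _ ≤ ∑ ℓ ∈ Finset.range N, (N : ℝ≥0∞) ^ (ℓ+1) * (ENNReal.ofReal q) ^ (ℓ+1) := by
          apply Finset.sum_le_sum
          intro ℓ _
          calc ∑ f ∈ Finset.univ.filter
                (fun f : Fin (ℓ+1) → Fin N => Function.Injective f), P (Ev ℓ f)
              ≤ ∑ f ∈ Finset.univ.filter
                (fun f : Fin (ℓ+1) → Fin N => Function.Injective f),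
                  (ENNReal.ofReal q) ^ (ℓ+1) :=
                Finset.sum_le_sum (fun f hfmem =>
                  hEv ℓ f (Finset.mem_filter.mp hfmem).2)
            _ = (Finset.univ.filter
                (fun f : Fin (ℓ+1) → Fin N => Function.Injective f)).card
                  * (ENNReal.ofReal q) ^ (ℓ+1) := by
                rw [Finset.sum_const, nsmul_eq_mul]
            _ ≤ (N : ℝ≥0∞) ^ (ℓ+1) * (ENNReal.ofReal q) ^ (ℓ+1) := by
                apply mul_le_mul_left
                have h1 : (Finset.univ.filter
                    (fun f : Fin (ℓ+1) → Fin N => Function.Injective f)).card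
                    ≤ N ^ (ℓ+1) := by
                  calc _ ≤ (Finset.univ : Finset (Fin (ℓ+1) → Fin N)).card :=
                        Finset.card_filter_le _ _
                    _ = N ^ (ℓ+1) := by
                        rw [Finset.card_univ, Fintype.card_fun]
                        simp
                calc ((Finset.univ.filter
                    (fun f : Fin (ℓ+1) → Fin N => Function.Injective f)).card : ℝ≥0∞)
                    ≤ ((N ^ (ℓ+1) : ℕ) : ℝ≥0∞) := Nat.cast_le.mpr h1
                  _ = (N : ℝ≥0∞) ^ (ℓ+1) := by push_cast; ring
      _ = ∑ ℓ ∈ Finset.range N, ENNReal.ofReal ((q * N) ^ (ℓ+1)) := by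
          apply Finset.sum_congr rfl
          intro ℓ _
          rw [ENNReal.ofReal_pow (by positivity), ENNReal.ofReal_mul hq,
            ENNReal.ofReal_natCast, mul_pow, mul_comm]
      _ = ∑ m ∈ Finset.Icc 1 N, ENNReal.ofReal ((q * N) ^ m) := by
          rw [← Finset.Ico_add_one_right_eq_Icc, Finset.sum_Ico_eq_sum_range]
          simp only [Nat.add_sub_cancel, Nat.succ_sub_one]
          apply Finset.sum_congr rfl
          intro i _
          rw [Nat.add_comm 1 i]
  have hfin : ∀ m ∈ Finset.Icc 1 N, ENNReal.ofReal ((q * N) ^ m) ≠ ⊤ :=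
    fun m _ => ENNReal.ofReal_ne_top
  have hfirst : (P E).toReal ≤ ∑ ℓ ∈ Finset.Icc 1 N, (q * N) ^ ℓ := by
    have h1 := ENNReal.toReal_mono (by
      rw [Ne, ENNReal.sum_eq_top]; push_neg; exact hfin) hmain
    rw [ENNReal.toReal_sum hfin] at h1
    calc (P E).toReal ≤ ∑ m ∈ Finset.Icc 1 N, (ENNReal.ofReal ((q * N) ^ m)).toReal := h1
      _ = ∑ ℓ ∈ Finset.Icc 1 N, (q * N) ^ ℓ := by
          apply Finset.sum_congr rfl
          intro m _
          rw [ENNReal.toReal_ofReal (by positivity)]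
  refine ⟨hfirst, fun hhalf => ?_⟩
  have hgeom : ∑ ℓ ∈ Finset.Icc 1 N, (q * N) ^ ℓ ≤ 2 * (q * N) := by
    set x := q * N with hx
    have hx0 : 0 ≤ x := by positivity
    have h1 : ∑ ℓ ∈ Finset.Icc 1 N, x ^ ℓ = x * ∑ i ∈ Finset.range N, x ^ i := by
      rw [← Finset.Ico_add_one_right_eq_Icc, Finset.sum_Ico_eq_sum_range]
      simp only [Nat.add_sub_cancel, Nat.succ_sub_one]
      rw [Finset.mul_sum]
      apply Finset.sum_congr rfl
      intro i _
      rw [pow_add, pow_one]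
    rw [h1]
    have h2 : ∑ i ∈ Finset.range N, x ^ i ≤ ∑ i ∈ Finset.range N, (1/2 : ℝ) ^ i :=
      Finset.sum_le_sum (fun i _ => pow_le_pow_left₀ hx0 hhalf i)
    have h3 : ∑ i ∈ Finset.range N, (1/2 : ℝ) ^ i ≤ 2 := by
      rw [geom_sum_eq (show (1/2 : ℝ) ≠ 1 by norm_num) N]
      have hN : (0:ℝ) ≤ (1/2 : ℝ) ^ N := by positivity
      rw [div_le_iff_of_neg (by norm_num : (1/2 : ℝ) - 1 < 0)]
      linarith
    calc x * ∑ i ∈ Finset.range N, x ^ i ≤ x * 2 :=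
        mul_le_mul_of_nonneg_left (h2.trans h3) hx0
      _ = 2 * x := by ring
  exact hfirst.trans hgeom
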